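/- (Weak Birkhoff–von Neumann theorem.) Let k, l ∈ ℕ with k > l, and let X and Y be finite sets with |X| = k and |Y| = l. Then for every probabilistic map γ : X → PMF(Y) there exist N ∈ ℕ, deterministic functions γ₁, …, γ_N : X → Y, and weights a₁, …, a_N ∈ [0,1] with Σ_{m=1}^N a_m = 1 such that γ(x) = Σ_{m=1}^N a_m · δ_{γ_m(x)} for every x ∈ X. -/

import Mathlib

open scoped ENNReal

/-- Weak Birkhoff–von Neumann theorem: every probabilistic map from a finite set of
cardinality `k` to a finite set of cardinality `l < k` is a finite convex combination
of deterministic maps (the convex combination being taken pointwise in `PMF Y`). -/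
theorem weak_birkhoff_von_neumann {X Y : Type} [Fintype X] [Fintype Y]
    (k l : ℕ) (hX : Fintype.card X = k) (hY : Fintype.card Y = l) (hkl : k > l)
    (γ : X → PMF Y) :
    ∃ (N : ℕ) (g : Fin N → X → Y) (a : Fin N → ℝ≥0∞),
      (∀ m, a m ≤ 1) ∧ (∑ m, a m = 1) ∧
      ∀ x y, γ x y = ∑ m, a m * (PMF.pure (g m x)) y := by
  classical
  have hsum : ∀ x, ∑ y : Y, γ x y = 1 := fun x => by
    rw [← tsum_fintype (L := SummationFilter.unconditional _)]; exact (γ x).tsum_coe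
  set e : Fin (Fintype.card (X → Y)) ≃ (X → Y) := (Fintype.equivFin (X → Y)).symm
  refine ⟨Fintype.card (X → Y), fun m => e m, fun m => ∏ x, γ x (e m x), ?_, ?_, ?_⟩
  · intro m
    exact Finset.prod_le_one (fun _ _ => zero_le) (fun x _ => (γ x).coe_le_one _)
  · rw [Equiv.sum_comp e (fun g : X → Y => ∏ x, γ x (g x)), ← Fintype.prod_sum]
    simp [hsum]
  · intro x y
    rw [Equiv.sum_comp e (fun g : X → Y => (∏ x', γ x' (g x')) * (PMF.pure (g x)) y)]
    set f : X → Y → ℝ≥0∞ :=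
      fun x' z => if x' = x then γ x z * (if y = z then 1 else 0) else γ x' z with hf
    have key : ∀ g : X → Y,
        (∏ x', γ x' (g x')) * (PMF.pure (g x)) y = ∏ x', f x' (g x') := by
      intro g
      rw [← Finset.mul_prod_erase Finset.univ (fun x' => f x' (g x')) (Finset.mem_univ x),
        ← Finset.mul_prod_erase Finset.univ (fun x' => γ x' (g x')) (Finset.mem_univ x)]
      have h1 : ∏ x' ∈ Finset.univ.erase x, f x' (g x')
          = ∏ x' ∈ Finset.univ.erase x, γ x' (g x') :=
        Finset.prod_congr rfl fun x' hx' => by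
          simp [hf, Finset.ne_of_mem_erase hx']
      rw [h1]
      simp only [hf, if_pos rfl, PMF.pure_apply]
      ring
    simp only [key]
    rw [← Fintype.prod_sum f,
      ← Finset.mul_prod_erase Finset.univ (fun x' => ∑ z, f x' z) (Finset.mem_univ x)]
    have h2 : ∏ x' ∈ Finset.univ.erase x, ∑ z, f x' z = 1 := by
      refine Finset.prod_eq_one fun x' hx' => ?_
      simp [hf, Finset.ne_of_mem_erase hx', hsum x']
    have h3 : ∑ z, f x z = γ x y := by
      simp [hf, mul_ite, Finset.sum_ite_eq]
    rw [h2, h3, mul_one]
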